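/- Let Q(X) = a_d X^d + a_{d-1} X^{d-1} + ⋯ + a_1 X + a_0 ∈ ℂ[X] be a polynomial of degree d ≥ 1, and suppose z ∈ ℂ is a root of Q of multiplicity m ≥ 1 with |z| ≠ 1. Fix j ∈ {1,...,d} and set R(X) = a_d X^j + a_{d-1} X^{j-1} + ⋯ + a_{d-j}. Then for each k ∈ {0,1,...,m-1}, the k-th derivative of R satisfies |R^{(k)}(z)| ≤ k! · H(Q) / | |z| - 1 |^{k+1}, where H(Q) = max{|a_d|, |a_{d-1}|, ..., |a_0|} is the height of Q. -/

import Mathlib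

open Polynomial Finset

/- ### Auxiliary lemmas -/

lemma aux_sum_choose_le (k N : ℕ) {u : ℝ} (hu0 : 0 ≤ u) (hu1 : u < 1) :
    ∑ s ∈ Finset.range N, ((s + k).choose k : ℝ) * u ^ s ≤ 1 / (1 - u) ^ (k + 1) := by
  have h := hasSum_choose_mul_geometric_of_norm_lt_one (𝕜 := ℝ) k
    (r := u) (by rwa [Real.norm_eq_abs, abs_of_nonneg hu0])
  exact sum_le_hasSum (Finset.range N) (fun i _ => by positivity) h

lemma sum_choose_pow_le (N k : ℕ) {v : ℝ} (h0 : 0 ≤ v) (h1 : v < 1) :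
    ∑ i ∈ Finset.range N, (i.choose k : ℝ) * v ^ (i - k) ≤ 1 / (1 - v) ^ (k + 1) := by
  rcases le_or_gt N k with h | h
  · have hz : ∀ i ∈ Finset.range N, (i.choose k : ℝ) * v ^ (i - k) = 0 := by
      intro i hi
      simp only [Finset.mem_range] at hi
      rw [Nat.choose_eq_zero_of_lt (by omega)]
      simp
    rw [Finset.sum_eq_zero hz]
    have h1v : (0:ℝ) < 1 - v := by linarith
    positivity
  · rw [← Finset.sum_range_add_sum_Ico _ (le_of_lt h)]
    have hz : ∀ i ∈ Finset.range k, (i.choose k : ℝ) * v ^ (i - k) = 0 := by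
      intro i hi
      simp only [Finset.mem_range] at hi
      rw [Nat.choose_eq_zero_of_lt (by omega)]
      simp
    rw [Finset.sum_eq_zero hz, zero_add, Finset.sum_Ico_eq_sum_range]
    have he : ∀ i ∈ Finset.range (N - k), ((k + i).choose k : ℝ) * v ^ (k + i - k)
        = ((i + k).choose k : ℝ) * v ^ i := by
      intro i _
      rw [add_comm k i, Nat.add_sub_cancel]
    rw [Finset.sum_congr rfl he]
    exact aux_sum_choose_le k _ h0 h1

lemma nat_prod_desc (t k : ℕ) (ht : 1 ≤ t) :
    ∏ l ∈ Finset.range k, (t + l) = (t - 1 + k).descFactorial k := by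
  rw [Nat.descFactorial_eq_prod_range, ← Finset.prod_range_reflect]
  apply Finset.prod_congr rfl
  intro l hl
  simp only [Finset.mem_range] at hl
  omega

lemma cprod_abs (e k i : ℕ) (hi : i < e) :
    ‖∏ l ∈ Finset.range k, ((i:ℂ) - e - l)‖ = ((e - 1 - i + k).descFactorial k : ℝ) := by
  rw [norm_prod]
  have hterm : ∀ l ∈ Finset.range k, ‖(i:ℂ) - e - l‖ = ((e - i + l : ℕ) : ℝ) := by
    intro l _
    have hcast : ((i:ℂ) - e - l) = -(((e - i + l : ℕ) : ℂ)) := by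
      push_cast [Nat.cast_sub (le_of_lt hi)]
      ring
    rw [hcast, norm_neg, Complex.norm_natCast]
  rw [Finset.prod_congr rfl hterm, ← Nat.cast_prod, nat_prod_desc (e - i) k (by omega)]
  have : e - i - 1 + k = e - 1 - i + k := by omega
  rw [this]

lemma final_sum (e k : ℕ) (v : ℝ) (hv : 1 < v) :
    (∑ i ∈ Finset.range e, ((e - 1 - i + k).choose k : ℝ) * v ^ i) / v ^ (e + k)
      ≤ 1 / (v - 1) ^ (k + 1) := by
  have hv0 : (0:ℝ) < v := lt_trans one_pos hv
  have hv0' : v ≠ 0 := ne_of_gt hv0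
  have hv1 : v - 1 ≠ 0 := by intro h; nlinarith
  set u := v⁻¹ with hu
  have hu0 : 0 ≤ u := by positivity
  have hu1 : u < 1 := by
    rw [hu]
    exact inv_lt_one_of_one_lt₀ hv
  rw [← Finset.sum_range_reflect]
  have step1 : ∀ i ∈ Finset.range e,
      ((e - 1 - (e - 1 - i) + k).choose k : ℝ) * v ^ (e - 1 - i)
        = (((i + k).choose k : ℝ) * u ^ i) * (u ^ (k + 1) * v ^ (e + k)) := by
    intro i hi
    simp only [Finset.mem_range] at hi
    have h1 : e - 1 - (e - 1 - i) = i := by omega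
    have h2 : v ^ (e - 1 - i) * v ^ (i + k + 1) = v ^ (e + k) := by
      rw [← pow_add]; congr 1; omega
    rw [h1, hu, ← h2]
    rw [inv_pow, inv_pow]
    field_simp
    ring
  rw [Finset.sum_congr rfl step1, ← Finset.sum_mul]
  rw [div_le_iff₀ (by positivity)]
  have hb := aux_sum_choose_le k e hu0 hu1
  have hpos : (0:ℝ) < u ^ (k + 1) * v ^ (e + k) := by positivity
  calc (∑ i ∈ Finset.range e, ((i + k).choose k : ℝ) * u ^ i) * (u ^ (k + 1) * v ^ (e + k))
      ≤ (1 / (1 - u) ^ (k + 1)) * (u ^ (k + 1) * v ^ (e + k)) := by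
        apply mul_le_mul_of_nonneg_right hb (le_of_lt hpos)
    _ = 1 / (v - 1) ^ (k + 1) * v ^ (e + k) := by
        have h1u : 1 - u = (v - 1) / v := by
          rw [eq_div_iff hv0', sub_mul, one_mul, hu, inv_mul_cancel₀ hv0']
        rw [h1u, div_pow, hu, inv_pow]
        field_simp

lemma it_der_X_mul (q : Polynomial ℂ) (i : ℕ) :
    (⇑derivative)^[i+1] (X * q) =
      X * (⇑derivative)^[i+1] q + (i+1) • (⇑derivative)^[i] q := by
  induction i with
  | zero => simp [derivative_mul]; abel
  | succ i ih =>
    rw [Function.iterate_succ_apply', ih, derivative_add, derivative_mul, derivative_X,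
      one_mul, map_nsmul, ← Function.iterate_succ_apply' derivative (i+1),
      ← Function.iterate_succ_apply' derivative i]
    simp only [nsmul_eq_mul, Nat.succ_eq_add_one]
    push_cast
    ring

/-- `Gs' e p k` is `X^(e+k)` times the formal `k`-th derivative of `p(X)/X^e`. -/
noncomputable def Gs' (e : ℕ) (p : Polynomial ℂ) : ℕ → Polynomial ℂ
  | 0 => p
  | k+1 => X * derivative (Gs' e p k) - C ((e + k : ℕ) : ℂ) * Gs' e p k

lemma Gs_sub (e : ℕ) (p q : Polynomial ℂ) (k : ℕ) :
    Gs' e (p - q) k = Gs' e p k - Gs' e q k := by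
  induction k with
  | zero => rfl
  | succ k ih => simp only [Gs', ih, derivative_sub]; ring

lemma Gs_eval_zero (e : ℕ) (p : Polynomial ℂ) (z : ℂ) (m : ℕ)
    (hvan : ∀ i < m, ((⇑derivative)^[i] p).eval z = 0) :
    ∀ k, ∀ i, i + k < m → ((⇑derivative)^[i] (Gs' e p k)).eval z = 0 := by
  intro k
  induction k with
  | zero => exact fun i hi => hvan i (by omega)
  | succ k ih =>
    intro i hi
    have h1 : ∀ n, (⇑derivative)^[n] (derivative (Gs' e p k)) = (⇑derivative)^[n+1] (Gs' e p k) :=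
      fun n => (Function.iterate_succ_apply derivative n _).symm
    rw [show Gs' e p (k+1) = X * derivative (Gs' e p k) - C ((e + k : ℕ) : ℂ) * Gs' e p k from rfl,
      iterate_derivative_sub, iterate_derivative_C_mul, eval_sub, eval_mul, eval_C]
    rw [ih i (by omega)]
    cases i with
    | zero =>
      simp only [Function.iterate_zero, id_eq, eval_mul, eval_X]
      rw [show derivative (Gs' e p k) = (⇑derivative)^[1] (Gs' e p k) from rfl, ih 1 (by omega)]
      ring
    | succ i =>
      rw [it_der_X_mul, eval_add, eval_mul, eval_X, eval_smul, h1, h1,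
        ih (i+1+1) (by omega), ih (i+1) (by omega)]
      simp

lemma Gs_S (e k : ℕ) (a : ℕ → ℂ) :
    Gs' e (∑ i ∈ Finset.range e, C (a i) * X ^ i) k
      = ∑ i ∈ Finset.range e, C (a i * ∏ l ∈ Finset.range k, ((i:ℂ) - e - l)) * X ^ i := by
  induction k with
  | zero => simp [Gs']
  | succ k ih =>
    rw [show Gs' e _ (k+1) = X * derivative (Gs' e _ k)
        - C ((e + k : ℕ) : ℂ) * Gs' e _ k from rfl, ih, derivative_sum, mul_sum, mul_sum,
      ← Finset.sum_sub_distrib]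
    refine Finset.sum_congr rfl fun i _ => ?_
    set b := a i * ∏ l ∈ Finset.range k, ((i:ℂ) - e - l) with hb
    have key : X * derivative (C b * X ^ i) - C ((e + k : ℕ) : ℂ) * (C b * X ^ i)
        = C (b * ((i : ℂ) - (e + k : ℕ))) * X ^ i := by
      cases i with
      | zero => simp; ring
      | succ i =>
        rw [derivative_C_mul_X_pow]
        simp only [Nat.add_sub_cancel]
        rw [show (X : Polynomial ℂ) * (C (b * (i+1:ℕ)) * X ^ i)
            = C (b * (i+1:ℕ)) * X ^ (i+1) by ring,
          show C ((e + k : ℕ) : ℂ) * (C b * X ^ (i+1))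
            = C (((e + k : ℕ) : ℂ) * b) * X ^ (i+1) by rw [← mul_assoc, ← C_mul],
          ← sub_mul, ← C_sub]
        congr 1
        apply congrArg
        push_cast
        ring
    rw [key, Finset.prod_range_succ, hb]
    congr 1
    apply congrArg
    push_cast
    ring

lemma main_id (e : ℕ) (he : 1 ≤ e) (R : Polynomial ℂ) (k : ℕ) :
    X ^ (e + k) * (⇑derivative)^[k] R = Gs' e (X ^ e * R) k := by
  induction k with
  | zero => simp [Gs']
  | succ k ih =>
    rw [show Gs' e _ (k+1) = X * derivative (Gs' e _ k)
        - C ((e + k : ℕ) : ℂ) * Gs' e _ k from rfl, ← ih,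
      derivative_mul, derivative_X_pow, Function.iterate_succ_apply']
    have h2 : (X : Polynomial ℂ) * X ^ (e + k - 1) = X ^ (e + k) := by
      rw [← pow_succ']
      congr 1
      omega
    rw [mul_add, ← mul_assoc, ← mul_assoc, mul_comm (X : Polynomial ℂ) (C ((e+k:ℕ):ℂ)),
      mul_assoc (C ((e+k:ℕ):ℂ)), h2]
    ring_nf

/- ### Main theorem -/

theorem deriv_bound_at_root
    (Q : Polynomial ℂ) (d : ℕ) (hd : 1 ≤ d) (hdeg : Q.natDegree = d)
    (z : ℂ) (hz : ‖z‖ ≠ 1)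
    (m : ℕ) (hm : 1 ≤ m) (hmult : Q.rootMultiplicity z = m)
    (j : ℕ) (hj1 : 1 ≤ j) (hjd : j ≤ d)
    (R : Polynomial ℂ)
    (hR : R = ∑ i ∈ Finset.range (j + 1), Polynomial.C (Q.coeff (d - j + i)) * X ^ i)
    (k : ℕ) (hk : k < m) :
    ‖((⇑Polynomial.derivative)^[k] R).eval z‖ ≤
      (k.factorial : ℝ) *
          ((Finset.range (d + 1)).sup' (Finset.nonempty_range_add_one)
            fun i => ‖Q.coeff i‖) /
        |‖z‖ - 1| ^ (k + 1) := by
  set H : ℝ := (Finset.range (d + 1)).sup' (Finset.nonempty_range_add_one)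
      (fun i => ‖Q.coeff i‖) with hH
  set v : ℝ := ‖z‖ with hv
  have hH0 : 0 ≤ H := le_trans (norm_nonneg (Q.coeff 0))
    (Finset.le_sup' (fun i => ‖Q.coeff i‖) (Finset.mem_range.mpr (by omega)))
  have hHc : ∀ i, ‖Q.coeff i‖ ≤ H := by
    intro i
    by_cases hi : i ≤ d
    · exact Finset.le_sup' (fun i => ‖Q.coeff i‖) (Finset.mem_range.mpr (by omega))
    · rw [Polynomial.coeff_eq_zero_of_natDegree_lt (by omega)]
      simpa using hH0
  have hv0 : 0 ≤ v := norm_nonneg z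
  have hvan : ∀ i < m, ((⇑derivative)^[i] Q).eval z = 0 := by
    intro i hi
    exact isRoot_iterate_derivative_of_lt_rootMultiplicity (by rw [hmult]; exact hi)
  rcases lt_or_gt_of_ne hz with hvlt | hvgt
  · -- Case |z| < 1
    have hDk : ((⇑derivative)^[k] R).eval z
        = ∑ i ∈ Finset.range (j+1),
            Q.coeff (d - j + i) * ((i.descFactorial k : ℂ) * z ^ (i - k)) := by
      rw [hR, iterate_derivative_sum, eval_finset_sum]
      refine Finset.sum_congr rfl fun i _ => ?_
      rw [iterate_derivative_C_mul, iterate_derivative_X_pow_eq_smul, eval_mul, eval_C,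
        eval_smul, eval_pow, eval_X]
      simp [nsmul_eq_mul]
    have habs1 : |v - 1| = 1 - v := by
      rw [abs_of_neg (by linarith)]
      ring
    calc ‖((⇑derivative)^[k] R).eval z‖
        ≤ ∑ i ∈ Finset.range (j+1),
            ‖Q.coeff (d - j + i) * ((i.descFactorial k : ℂ) * z ^ (i - k))‖ := by
          rw [hDk]
          exact norm_sum_le _ _
      _ = ∑ i ∈ Finset.range (j+1),
            ‖Q.coeff (d - j + i)‖ * ((i.descFactorial k : ℝ) * v ^ (i - k)) := by
          refine Finset.sum_congr rfl fun i _ => ?_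
          rw [norm_mul, norm_mul, norm_pow, Complex.norm_natCast]
      _ ≤ ∑ i ∈ Finset.range (j+1), H * ((i.descFactorial k : ℝ) * v ^ (i - k)) := by
          refine Finset.sum_le_sum fun i _ => ?_
          apply mul_le_mul_of_nonneg_right (hHc _) (by positivity)
      _ = (k.factorial : ℝ) * H
            * ∑ i ∈ Finset.range (j+1), (i.choose k : ℝ) * v ^ (i - k) := by
          rw [Finset.mul_sum]
          refine Finset.sum_congr rfl fun i _ => ?_
          rw [Nat.descFactorial_eq_factorial_mul_choose]
          push_cast
          ring
      _ ≤ (k.factorial : ℝ) * H * (1 / (1 - v) ^ (k + 1)) := by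
          apply mul_le_mul_of_nonneg_left (sum_choose_pow_le _ _ hv0 hvlt) (by positivity)
      _ = (k.factorial : ℝ) * H / |v - 1| ^ (k + 1) := by
          rw [habs1]
          ring
  · -- Case |z| > 1
    have hv1 : (1:ℝ) < v := hvgt
    have habs1 : |v - 1| = v - 1 := abs_of_pos (by linarith)
    by_cases hjd' : j = d
    · -- subcase j = d : R = Q
      have hRQ : R = Q := by
        have hQs := Q.as_sum_range_C_mul_X_pow
        rw [hdeg] at hQs
        rw [hR, hjd']
        simp only [Nat.sub_self, Nat.zero_add, zero_add]
        exact hQs.symm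
      have h0 : ((⇑derivative)^[k] R).eval z = 0 := by
        rw [hRQ]; exact hvan k hk
      rw [h0, norm_zero]
      positivity
    · -- subcase j < d
      set e : ℕ := d - j with he
      have he1 : 1 ≤ e := by omega
      set S : Polynomial ℂ := ∑ i ∈ Finset.range e, C (Q.coeff i) * X ^ i with hS
      have hsplit : X ^ e * R = Q - S := by
        rw [eq_sub_iff_add_eq]
        have hQs := Q.as_sum_range_C_mul_X_pow
        rw [hdeg] at hQs
        rw [hR, Finset.mul_sum, hS]
        conv_rhs => rw [hQs]
        rw [← Finset.sum_range_add_sum_Ico _ (show e ≤ d + 1 by omega), add_comm]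
        congr 1
        rw [Finset.sum_Ico_eq_sum_range]
        have hde : d + 1 - e = j + 1 := by omega
        rw [hde]
        refine Finset.sum_congr rfl fun i _ => ?_
        have hdi : d - j + i = e + i := rfl
        rw [hdi, pow_add]
        ring
      have hid : X ^ (e + k) * (⇑derivative)^[k] R = Gs' e Q k - Gs' e S k := by
        rw [main_id e he1 R k, hsplit, Gs_sub]
      have hvanQ : (Gs' e Q k).eval z = 0 := Gs_eval_zero e Q z m hvan k 0 (by omega)
      have hkey : z ^ (e + k) * ((⇑derivative)^[k] R).eval z = - (Gs' e S k).eval z := by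
        have h := congrArg (eval z) hid
        rw [eval_mul, eval_pow, eval_X, eval_sub, hvanQ] at h
        rw [h]
        ring
      have habs : v ^ (e + k) * ‖((⇑derivative)^[k] R).eval z‖
          = ‖(Gs' e S k).eval z‖ := by
        have h : ‖z ^ (e + k) * ((⇑derivative)^[k] R).eval z‖ = ‖-(Gs' e S k).eval z‖ := by
          rw [hkey]
        rwa [norm_mul, norm_pow, norm_neg] at h
      have hvek : (0:ℝ) < v ^ (e + k) := by positivity
      have heval : ‖((⇑derivative)^[k] R).eval z‖
          = ‖(Gs' e S k).eval z‖ / v ^ (e + k) := by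
        rw [eq_div_iff (ne_of_gt hvek), mul_comm, habs]
      have hTS : Gs' e S k = ∑ i ∈ Finset.range e,
          C (Q.coeff i * ∏ l ∈ Finset.range k, ((i:ℂ) - e - l)) * X ^ i := Gs_S e k _
      have hTbound : ‖(Gs' e S k).eval z‖
          ≤ H * (k.factorial : ℝ)
              * ∑ i ∈ Finset.range e, ((e - 1 - i + k).choose k : ℝ) * v ^ i := by
        rw [hTS, eval_finset_sum]
        refine le_trans (norm_sum_le _ _) ?_
        rw [Finset.mul_sum]
        refine Finset.sum_le_sum fun i hi => ?_
        simp only [Finset.mem_range] at hi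
        rw [eval_mul, eval_C, eval_pow, eval_X, norm_mul, norm_mul, norm_pow,
          cprod_abs e k i hi, Nat.descFactorial_eq_factorial_mul_choose]
        push_cast
        have h1 : ‖Q.coeff i‖ * ((k.factorial : ℝ)
            * ((e - 1 - i + k).choose k : ℝ) * v ^ i)
            ≤ H * ((k.factorial : ℝ) * ((e - 1 - i + k).choose k : ℝ) * v ^ i) :=
          mul_le_mul_of_nonneg_right (hHc i) (by positivity)
        calc ‖Q.coeff i‖ * ((k.factorial : ℝ) * ((e - 1 - i + k).choose k : ℝ))
              * v ^ i
            = ‖Q.coeff i‖ * ((k.factorial : ℝ)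
              * ((e - 1 - i + k).choose k : ℝ) * v ^ i) := by ring
          _ ≤ H * ((k.factorial : ℝ) * ((e - 1 - i + k).choose k : ℝ) * v ^ i) := h1
          _ = H * (k.factorial : ℝ) * (((e - 1 - i + k).choose k : ℝ) * v ^ i) := by ring
      calc ‖((⇑derivative)^[k] R).eval z‖
          = ‖(Gs' e S k).eval z‖ / v ^ (e + k) := heval
        _ ≤ (H * (k.factorial : ℝ)
              * ∑ i ∈ Finset.range e, ((e - 1 - i + k).choose k : ℝ) * v ^ i) / v ^ (e + k) :=
            (div_le_div_iff_of_pos_right hvek).mpr hTbound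
        _ = H * (k.factorial : ℝ)
              * ((∑ i ∈ Finset.range e, ((e - 1 - i + k).choose k : ℝ) * v ^ i) / v ^ (e + k)) :=
            by rw [mul_div_assoc]
        _ ≤ H * (k.factorial : ℝ) * (1 / (v - 1) ^ (k + 1)) :=
            mul_le_mul_of_nonneg_left (final_sum e k v hv1) (by positivity)
        _ = (k.factorial : ℝ) * H / |v - 1| ^ (k + 1) := by
            rw [habs1]
            ring
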